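/- arXiv:1811.07181 — 2 statements merged into one kernel-verified Lean document; each statement's English description precedes it below -/
import Mathlib

section
/- For all real numbers p ≥ 2 and all vectors A, B in ℝ^n, one has |A + B|^p - |A|^p ≥ (2^{p-1} - 1)^{-1} |B|^p + p |A|^{p-2} ⟨A, B⟩, where ⟨·,·⟩ denotes the Euclidean inner product and |·| the Euclidean norm (with the convention that |A|^{p-2}⟨A,B⟩ = 0 when A = 0). -/
open Real

/-- Tangent line inequality for `rpow`. -/
private lemma tangent_rpow {s t p : ℝ} (hs : 0 < s) (ht : 0 ≤ t) (hp : 1 ≤ p) :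
    s ^ p + p * s ^ (p - 1) * (t - s) ≤ t ^ p := by
  have hz : -1 ≤ t / s - 1 := by
    have h0 : 0 ≤ t / s := div_nonneg ht hs.le
    linarith
  have h := one_add_mul_self_le_rpow_one_add hz hp
  have h1 : 1 + (t / s - 1) = t / s := by ring
  rw [h1] at h
  have hsp : (0 : ℝ) < s ^ p := rpow_pos_of_pos hs p
  have h2 := mul_le_mul_of_nonneg_left h hsp.le
  rw [div_rpow ht hs.le] at h2
  have h3 : s ^ p * (t ^ p / s ^ p) = t ^ p := by field_simp
  rw [h3] at h2
  have h4 : s ^ (p - 1) = s ^ p / s := by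
    rw [Real.rpow_sub hs, Real.rpow_one]
  calc s ^ p + p * s ^ (p - 1) * (t - s)
      = s ^ p * (1 + p * (t / s - 1)) := by rw [h4]; field_simp
    _ ≤ t ^ p := h2

/-- Bregman divergence of `‖·‖^p` is nonnegative. -/
private lemma bregman_nonneg {n : ℕ} {p : ℝ} (hp : 2 ≤ p) (A V : EuclideanSpace ℝ (Fin n)) :
    p * ‖A‖ ^ (p - 2) * (inner ℝ A V : ℝ) ≤ ‖A + V‖ ^ p - ‖A‖ ^ p := by
  rcases eq_or_ne A 0 with rfl | hA
  · have hp0 : p ≠ 0 := by linarith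
    simp only [inner_zero_left, mul_zero, zero_add, norm_zero, Real.zero_rpow hp0, sub_zero]
    exact Real.rpow_nonneg (norm_nonneg V) p
  · have hs0 : (0 : ℝ) < ‖A‖ := norm_pos_iff.mpr hA
    have ht : (0 : ℝ) ≤ ‖A + V‖ := norm_nonneg _
    have hCS : (inner ℝ A (A + V) : ℝ) ≤ ‖A‖ * ‖A + V‖ := real_inner_le_norm A (A + V)
    have hinner : (inner ℝ A V : ℝ) = (inner ℝ A (A + V) : ℝ) - ‖A‖ * ‖A‖ := by
      rw [inner_add_right, real_inner_self_eq_norm_mul_norm]; ring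
    have h1 : (inner ℝ A V : ℝ) ≤ ‖A‖ * ‖A + V‖ - ‖A‖ * ‖A‖ := by
      rw [hinner]; linarith
    have hcoef : (0 : ℝ) ≤ p * ‖A‖ ^ (p - 2) := by positivity
    have hpow : ‖A‖ ^ (p - 2) * ‖A‖ = ‖A‖ ^ (p - 1) := by
      rw [← Real.rpow_add_one hs0.ne' (p - 2)]
      congr 1
      ring
    have key : p * ‖A‖ ^ (p - 2) * (inner ℝ A V : ℝ)
        ≤ p * ‖A‖ ^ (p - 1) * (‖A + V‖ - ‖A‖) := by
      calc p * ‖A‖ ^ (p - 2) * (inner ℝ A V : ℝ)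
          ≤ p * ‖A‖ ^ (p - 2) * (‖A‖ * ‖A + V‖ - ‖A‖ * ‖A‖) :=
            mul_le_mul_of_nonneg_left h1 hcoef
        _ = p * (‖A‖ ^ (p - 2) * ‖A‖) * (‖A + V‖ - ‖A‖) := by ring
        _ = p * ‖A‖ ^ (p - 1) * (‖A + V‖ - ‖A‖) := by rw [hpow]
    have htan := tangent_rpow hs0 ht (by linarith : 1 ≤ p)
    linarith

/-- `x ^ q + y ^ q ≤ (x + y) ^ q` for nonneg reals and `1 ≤ q`. -/
private lemma rpow_superadd {x y q : ℝ} (hx : 0 ≤ x) (hy : 0 ≤ y) (hq : 1 ≤ q) :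
    x ^ q + y ^ q ≤ (x + y) ^ q := by
  lift x to NNReal using hx
  lift y to NNReal using hy
  have := NNReal.add_rpow_le_rpow_add x y hq
  exact_mod_cast this

/-- Clarkson-type inequality for `p ≥ 2`. -/
private lemma clarkson {n : ℕ} {p : ℝ} (hp : 2 ≤ p) (x y : EuclideanSpace ℝ (Fin n)) :
    2 * ‖x‖ ^ p + 2 * ‖y‖ ^ p ≤ ‖x + y‖ ^ p + ‖x - y‖ ^ p := by
  set q : ℝ := p / 2 with hqdef
  have hq : 1 ≤ q := by rw [hqdef]; linarith
  have sqpow : ∀ z : EuclideanSpace ℝ (Fin n), ((‖z‖ ^ 2 : ℝ)) ^ q = ‖z‖ ^ p := by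
    intro z
    rw [← Real.rpow_natCast_mul (norm_nonneg z) 2 q]
    congr 1
    rw [hqdef]
    push_cast
    ring
  have par : ‖x + y‖ ^ 2 + ‖x - y‖ ^ 2 = 2 * (‖x‖ ^ 2 + ‖y‖ ^ 2) := by
    have := parallelogram_law_with_norm ℝ x y
    nlinarith [this]
  -- convexity step
  have hconv := (convexOn_rpow hq).2
    (Set.mem_Ici.mpr (sq_nonneg ‖x + y‖)) (Set.mem_Ici.mpr (sq_nonneg ‖x - y‖))
    (by norm_num : (0:ℝ) ≤ 1/2) (by norm_num : (0:ℝ) ≤ 1/2) (by norm_num)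
  simp only [smul_eq_mul] at hconv
  have hmid : (1:ℝ)/2 * (‖x + y‖ ^ 2) + 1/2 * (‖x - y‖ ^ 2) = ‖x‖ ^ 2 + ‖y‖ ^ 2 := by
    nlinarith [par]
  rw [hmid] at hconv
  have hsuper : (‖x‖ ^ 2 : ℝ) ^ q + (‖y‖ ^ 2 : ℝ) ^ q ≤ ((‖x‖ ^ 2 + ‖y‖ ^ 2 : ℝ)) ^ q :=
    rpow_superadd (sq_nonneg _) (sq_nonneg _) hq
  rw [sqpow, sqpow] at hsuper
  rw [sqpow, sqpow] at hconv
  linarith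

private lemma norm_half_rpow {n : ℕ} (p : ℝ) (B : EuclideanSpace ℝ (Fin n)) :
    ‖(2:ℝ)⁻¹ • B‖ ^ p = 2 ^ (-p) * ‖B‖ ^ p := by
  rw [norm_smul]
  have : ‖(2:ℝ)⁻¹‖ = (2:ℝ)⁻¹ := by simp [abs_of_nonneg]
  rw [this, Real.mul_rpow (by norm_num) (norm_nonneg B),
    ← Real.rpow_neg_one (2:ℝ), ← Real.rpow_mul (by norm_num : (0:ℝ) ≤ 2)]
  norm_num

private lemma two_rpow_split (p : ℝ) : (2:ℝ) ^ (1 - p) = 2 * 2 ^ (-p) := by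
  rw [show (1 - p) = 1 + (-p) by ring, Real.rpow_add two_pos, Real.rpow_one]

/-- Dyadic recursion. -/
private lemma recursion {n : ℕ} {p : ℝ} (hp : 2 ≤ p) (A B : EuclideanSpace ℝ (Fin n)) :
    2 * (‖A + (2:ℝ)⁻¹ • B‖ ^ p - ‖A‖ ^ p - p * ‖A‖ ^ (p - 2) * (inner ℝ A ((2:ℝ)⁻¹ • B) : ℝ))
      + 2 ^ (1 - p) * ‖B‖ ^ p
    ≤ ‖A + B‖ ^ p - ‖A‖ ^ p - p * ‖A‖ ^ (p - 2) * (inner ℝ A B : ℝ) := by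
  have hc := clarkson hp (A + (2:ℝ)⁻¹ • B) ((2:ℝ)⁻¹ • B)
  have hxy : A + (2:ℝ)⁻¹ • B + (2:ℝ)⁻¹ • B = A + B := by
    rw [add_assoc, ← add_smul]; norm_num
  have hxy' : A + (2:ℝ)⁻¹ • B - (2:ℝ)⁻¹ • B = A := add_sub_cancel_right _ _
  rw [hxy, hxy', norm_half_rpow p B] at hc
  have hinner : (inner ℝ A ((2:ℝ)⁻¹ • B) : ℝ) = (2:ℝ)⁻¹ * (inner ℝ A B : ℝ) :=
    real_inner_smul_right A B _
  rw [hinner]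
  have hE : 2 * (p * ‖A‖ ^ (p - 2) * ((2:ℝ)⁻¹ * (inner ℝ A B : ℝ)))
      = p * ‖A‖ ^ (p - 2) * (inner ℝ A B : ℝ) := by ring
  rw [two_rpow_split p]
  linarith [hc, hE]

/-- Iterated recursion. -/
private lemma iterate_bound {n : ℕ} {p : ℝ} (hp : 2 ≤ p) (A : EuclideanSpace ℝ (Fin n)) :
    ∀ K : ℕ, ∀ B : EuclideanSpace ℝ (Fin n),
      (∑ k ∈ Finset.range K, ((2:ℝ) ^ (1 - p)) ^ k) * (2 ^ (1 - p) * ‖B‖ ^ p)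
        ≤ ‖A + B‖ ^ p - ‖A‖ ^ p - p * ‖A‖ ^ (p - 2) * (inner ℝ A B : ℝ) := by
  intro K
  induction K with
  | zero =>
    intro B
    simpa using bregman_nonneg hp A B
  | succ K ih =>
    intro B
    have h1 := recursion hp A B
    have h2 := ih ((2:ℝ)⁻¹ • B)
    rw [norm_half_rpow p B] at h2
    have hgeom : (∑ k ∈ Finset.range (K + 1), ((2:ℝ) ^ (1 - p)) ^ k)
        = (2:ℝ) ^ (1 - p) * (∑ k ∈ Finset.range K, ((2:ℝ) ^ (1 - p)) ^ k) + 1 :=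
      geom_sum_succ
    have hsplit := two_rpow_split p
    have hE : (∑ k ∈ Finset.range (K + 1), ((2:ℝ) ^ (1 - p)) ^ k) * (2 ^ (1 - p) * ‖B‖ ^ p)
        = 2 * ((∑ k ∈ Finset.range K, ((2:ℝ) ^ (1 - p)) ^ k)
            * (2 ^ (1 - p) * (2 ^ (-p) * ‖B‖ ^ p)))
          + 2 ^ (1 - p) * ‖B‖ ^ p := by
      rw [hgeom, hsplit]; ring
    rw [hE]
    linarith

theorem convexity_lower_bound (n : ℕ) (p : ℝ) (hp : 2 ≤ p)
    (A B : EuclideanSpace ℝ (Fin n)) :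
    ‖A + B‖ ^ p - ‖A‖ ^ p ≥
      (2 ^ (p - 1) - 1)⁻¹ * ‖B‖ ^ p + p * ‖A‖ ^ (p - 2) * (inner ℝ A B : ℝ) := by
  have hr0 : (0:ℝ) ≤ 2 ^ (1 - p) := Real.rpow_nonneg (by norm_num) _
  have hr1 : (2:ℝ) ^ (1 - p) < 1 :=
    Real.rpow_lt_one_of_one_lt_of_neg one_lt_two (by linarith)
  have hsum : HasSum (fun k : ℕ => ((2:ℝ) ^ (1 - p)) ^ k) (1 - 2 ^ (1 - p))⁻¹ :=
    hasSum_geometric_of_lt_one hr0 hr1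
  have htend := (hsum.tendsto_sum_nat).mul_const ((2:ℝ) ^ (1 - p) * ‖B‖ ^ p)
  have hle : (1 - (2:ℝ) ^ (1 - p))⁻¹ * (2 ^ (1 - p) * ‖B‖ ^ p)
      ≤ ‖A + B‖ ^ p - ‖A‖ ^ p - p * ‖A‖ ^ (p - 2) * (inner ℝ A B : ℝ) :=
    le_of_tendsto' htend (fun K => iterate_bound hp A K B)
  have ha : (1:ℝ) < 2 ^ (p - 1) :=
    (Real.one_lt_rpow_iff_of_pos (by norm_num)).mpr (Or.inl ⟨one_lt_two, by linarith⟩)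
  have hab : (2:ℝ) ^ (p - 1) * 2 ^ (1 - p) = 1 := by
    rw [← Real.rpow_add two_pos]; norm_num
  have hconst : (1 - (2:ℝ) ^ (1 - p))⁻¹ * 2 ^ (1 - p) = ((2:ℝ) ^ (p - 1) - 1)⁻¹ := by
    have h1b : (0:ℝ) < 1 - 2 ^ (1 - p) := by linarith
    have ha1 : (0:ℝ) < 2 ^ (p - 1) - 1 := by linarith
    field_simp
    nlinarith [hab]
  have hfin : ((2:ℝ) ^ (p - 1) - 1)⁻¹ * ‖B‖ ^ p
      ≤ ‖A + B‖ ^ p - ‖A‖ ^ p - p * ‖A‖ ^ (p - 2) * (inner ℝ A B : ℝ) := by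
    calc ((2:ℝ) ^ (p - 1) - 1)⁻¹ * ‖B‖ ^ p
        = (1 - (2:ℝ) ^ (1 - p))⁻¹ * (2 ^ (1 - p) * ‖B‖ ^ p) := by
          rw [← hconst]; ring
      _ ≤ _ := hle
  linarith
end

section
/- On the Heisenberg group ℍ^n, for any ν = (ν_x, ν_y, ν_t) ∈ ℝ^{2n+1} and f(ξ) = ⟨ξ, ν⟩, the horizontal gradient ∇_H f = (X_1 f, …, X_n f, Y_1 f, …, Y_n f) and the horizontal gradient of its norm satisfy ⟨∇_H f(ξ), ∇_H |∇_H f|(ξ)⟩ = 0 at every point where |∇_H f(ξ)| ≠ 0. -/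
open MeasureTheory Real

noncomputable section

abbrev H (n : ℕ) := (Fin n → ℝ) × (Fin n → ℝ) × ℝ

/-- Coefficient vector of the left-invariant field `X_i` at `ξ`. -/
def Xv (n : ℕ) (i : Fin n) (ξ : H n) : H n := (Pi.single i 1, 0, 2 * ξ.2.1 i)

/-- Coefficient vector of the left-invariant field `Y_i` at `ξ`. -/
def Yv (n : ℕ) (i : Fin n) (ξ : H n) : H n := (0, Pi.single i 1, -(2 * ξ.1 i))

/-- The derivative `X_i f`. -/
def XD (n : ℕ) (i : Fin n) (f : H n → ℝ) (ξ : H n) : ℝ := fderiv ℝ f ξ (Xv n i ξ)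

/-- The derivative `Y_i f`. -/
def YD (n : ℕ) (i : Fin n) (f : H n → ℝ) (ξ : H n) : ℝ := fderiv ℝ f ξ (Yv n i ξ)

/-- Euclidean norm of the horizontal gradient. -/
def hNorm (n : ℕ) (f : H n → ℝ) (ξ : H n) : ℝ :=
  Real.sqrt (∑ i, ((XD n i f ξ) ^ 2 + (YD n i f ξ) ^ 2))

/-- Euclidean inner product on `ℝ^{2n+1}`. -/
def iprod (n : ℕ) (a b : H n) : ℝ :=
  (∑ i, a.1 i * b.1 i) + (∑ i, a.2.1 i * b.2.1 i) + a.2.2 * b.2.2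

/-- `iprod · ν` as a linear map. -/
def Lf (n : ℕ) (ν : H n) : H n →ₗ[ℝ] ℝ where
  toFun ζ := iprod n ζ ν
  map_add' x y := by
    simp only [iprod, Prod.fst_add, Prod.snd_add, Pi.add_apply, add_mul,
      Finset.sum_add_distrib]
    ring
  map_smul' r x := by
    simp only [iprod, Prod.smul_fst, Prod.smul_snd, Pi.smul_apply, smul_eq_mul,
      RingHom.id_apply]
    rw [mul_add, mul_add, Finset.mul_sum, Finset.mul_sum]
    ring_nf

/-- projection to `x_i` as CLM. -/
def px (n : ℕ) (i : Fin n) : H n →L[ℝ] ℝ :=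
  (ContinuousLinearMap.proj i).comp
    (ContinuousLinearMap.fst ℝ (Fin n → ℝ) ((Fin n → ℝ) × ℝ))

/-- projection to `y_i` as CLM. -/
def py (n : ℕ) (i : Fin n) : H n →L[ℝ] ℝ :=
  ((ContinuousLinearMap.proj i).comp
    (ContinuousLinearMap.fst ℝ (Fin n → ℝ) ℝ)).comp
    (ContinuousLinearMap.snd ℝ (Fin n → ℝ) ((Fin n → ℝ) × ℝ))

lemma hasFDerivAt_iprod (n : ℕ) (ν ζ : H n) :
    HasFDerivAt (fun z : H n => iprod n z ν) ((Lf n ν).toContinuousLinearMap) ζ :=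
  ((Lf n ν).toContinuousLinearMap).hasFDerivAt

lemma XD_linear (n : ℕ) (i : Fin n) (ν ξ : H n) :
    XD n i (fun ζ => iprod n ζ ν) ξ = ν.1 i + 2 * ξ.2.1 i * ν.2.2 := by
  have h := (hasFDerivAt_iprod n ν ξ).fderiv
  simp only [XD, h]
  show iprod n (Xv n i ξ) ν = _
  simp [iprod, Xv, Pi.single_apply, Finset.sum_ite_eq', ite_mul]

lemma YD_linear (n : ℕ) (i : Fin n) (ν ξ : H n) :
    YD n i (fun ζ => iprod n ζ ν) ξ = ν.2.1 i - 2 * ξ.1 i * ν.2.2 := by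
  have h := (hasFDerivAt_iprod n ν ξ).fderiv
  simp only [YD, h]
  show iprod n (Yv n i ξ) ν = _
  simp [iprod, Yv, Pi.single_apply, Finset.sum_ite_eq', ite_mul]
  ring

lemma hNorm_eq (n : ℕ) (ν : H n) :
    hNorm n (fun ζ => iprod n ζ ν)
      = fun ζ : H n => Real.sqrt (∑ i, ((ν.1 i + 2 * ζ.2.1 i * ν.2.2) ^ 2
          + (ν.2.1 i - 2 * ζ.1 i * ν.2.2) ^ 2)) := by
  funext ζ
  simp only [hNorm, XD_linear, YD_linear]

theorem hGrad_orthogonal_to_hGrad_of_norm (n : ℕ) (ν : H n) (ξ : H n)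
    (hW : hNorm n (fun ζ => iprod n ζ ν) ξ ≠ 0) :
    ∑ i, (XD n i (fun ζ => iprod n ζ ν) ξ
            * XD n i (hNorm n (fun ζ => iprod n ζ ν)) ξ
          + YD n i (fun ζ => iprod n ζ ν) ξ
            * YD n i (hNorm n (fun ζ => iprod n ζ ν)) ξ) = 0 := by
  set a : Fin n → ℝ := ν.1 with ha
  set b : Fin n → ℝ := ν.2.1 with hb
  set c : ℝ := ν.2.2 with hc
  set S : H n → ℝ := fun ζ =>
    ∑ i, ((a i + 2 * ζ.2.1 i * c) ^ 2 + (b i - 2 * ζ.1 i * c) ^ 2) with hSdef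
  have hNe : hNorm n (fun ζ => iprod n ζ ν) = fun ζ => Real.sqrt (S ζ) := hNorm_eq n ν
  have hS0 : S ξ ≠ 0 := by
    intro h
    apply hW
    rw [hNe]
    show Real.sqrt (S ξ) = 0
    rw [h, Real.sqrt_zero]
  -- derivatives of components
  have hA : ∀ i : Fin n, HasFDerivAt (fun ζ : H n => a i + 2 * ζ.2.1 i * c)
      (c • ((2 : ℝ) • py n i)) ξ := fun i =>
    ((((py n i).hasFDerivAt (x := ξ)).const_mul (2 : ℝ)).mul_const c).const_add (a i)
  have hB : ∀ i : Fin n, HasFDerivAt (fun ζ : H n => b i - 2 * ζ.1 i * c)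
      (-(c • ((2 : ℝ) • px n i))) ξ := fun i =>
    ((((px n i).hasFDerivAt (x := ξ)).const_mul (2 : ℝ)).mul_const c).const_sub (b i)
  have hA2 : ∀ i : Fin n, HasFDerivAt (fun ζ : H n => (a i + 2 * ζ.2.1 i * c) ^ 2)
      ((a i + 2 * ξ.2.1 i * c) • (c • ((2 : ℝ) • py n i))
        + (a i + 2 * ξ.2.1 i * c) • (c • ((2 : ℝ) • py n i))) ξ := fun i => by
    simpa [pow_two] using (hA i).fun_mul (hA i)
  have hB2 : ∀ i : Fin n, HasFDerivAt (fun ζ : H n => (b i - 2 * ζ.1 i * c) ^ 2)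
      ((b i - 2 * ξ.1 i * c) • (-(c • ((2 : ℝ) • px n i)))
        + (b i - 2 * ξ.1 i * c) • (-(c • ((2 : ℝ) • px n i)))) ξ := fun i => by
    simpa [pow_two] using (hB i).fun_mul (hB i)
  have hS : HasFDerivAt S
      (∑ i, (((a i + 2 * ξ.2.1 i * c) • (c • ((2 : ℝ) • py n i))
        + (a i + 2 * ξ.2.1 i * c) • (c • ((2 : ℝ) • py n i)))
        + ((b i - 2 * ξ.1 i * c) • (-(c • ((2 : ℝ) • px n i)))
        + (b i - 2 * ξ.1 i * c) • (-(c • ((2 : ℝ) • px n i)))))) ξ := by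
    exact HasFDerivAt.fun_sum (fun i _ => (hA2 i).fun_add (hB2 i))
  have hsq : HasDerivAt Real.sqrt (1 / (2 * Real.sqrt (S ξ))) (S ξ) :=
    Real.hasDerivAt_sqrt hS0
  have hN : HasFDerivAt (fun ζ : H n => Real.sqrt (S ζ))
      ((1 / (2 * Real.sqrt (S ξ))) • (∑ i, (((a i + 2 * ξ.2.1 i * c) • (c • ((2 : ℝ) • py n i))
        + (a i + 2 * ξ.2.1 i * c) • (c • ((2 : ℝ) • py n i)))
        + ((b i - 2 * ξ.1 i * c) • (-(c • ((2 : ℝ) • px n i)))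
        + (b i - 2 * ξ.1 i * c) • (-(c • ((2 : ℝ) • px n i))))))) ξ :=
    hsq.comp_hasFDerivAt ξ hS
  have hfd := hN.fderiv
  set W : ℝ := Real.sqrt (S ξ) with hWdef
  have hXDN : ∀ i : Fin n, XD n i (hNorm n (fun ζ => iprod n ζ ν)) ξ
      = (1 / (2 * W)) * (-(4 * c * (b i - 2 * ξ.1 i * c))) := by
    intro i
    rw [hNe]
    simp only [XD, hfd]
    simp only [ContinuousLinearMap.smul_apply, ContinuousLinearMap.coe_sum',
      Finset.sum_apply, ContinuousLinearMap.add_apply, ContinuousLinearMap.neg_apply,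
      ContinuousLinearMap.coe_comp', Function.comp_apply, ContinuousLinearMap.coe_fst',
      ContinuousLinearMap.coe_snd', ContinuousLinearMap.proj_apply, px, py, Xv,
      smul_eq_mul, Pi.single_apply]
    rw [Finset.sum_congr rfl (fun j _ => by split_ifs with h <;> simp [h] <;> ring :
      ∀ j ∈ Finset.univ, _ = if j = i then (-(4 * c * (b i - 2 * ξ.1 i * c)) : ℝ) else 0)]
    rw [Finset.sum_ite_eq' Finset.univ i]
    simp
  have hYDN : ∀ i : Fin n, YD n i (hNorm n (fun ζ => iprod n ζ ν)) ξ
      = (1 / (2 * W)) * (4 * c * (a i + 2 * ξ.2.1 i * c)) := by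
    intro i
    rw [hNe]
    simp only [YD, hfd]
    simp only [ContinuousLinearMap.smul_apply, ContinuousLinearMap.coe_sum',
      Finset.sum_apply, ContinuousLinearMap.add_apply, ContinuousLinearMap.neg_apply,
      ContinuousLinearMap.coe_comp', Function.comp_apply, ContinuousLinearMap.coe_fst',
      ContinuousLinearMap.coe_snd', ContinuousLinearMap.proj_apply, px, py, Yv,
      smul_eq_mul, Pi.single_apply]
    rw [Finset.sum_congr rfl (fun j _ => by split_ifs with h <;> simp [h] <;> ring :
      ∀ j ∈ Finset.univ, _ = if j = i then ((4 * c * (a i + 2 * ξ.2.1 i * c)) : ℝ) else 0)]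
    rw [Finset.sum_ite_eq' Finset.univ i]
    simp
  refine Finset.sum_eq_zero (fun i _ => ?_)
  rw [XD_linear, YD_linear, hXDN, hYDN]
  ring
end
end
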